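/- Let n > 1 be odd and k, ℓ : ZMod n. Then the graph F_k ⊔ F_ℓ (the union of the two near-one-factors, i.e., the simple graph on ZMod n whose adjacency is the disjunction of the adjacencies of F_k and F_ℓ) contains a Hamiltonian path — a path visiting every vertex of ZMod n exactly once — if and only if k − ℓ is a unit of ZMod n. (Two near-one-factors F_k and F_ℓ form a perfect pair exactly when k − ℓ is coprime to n.) -/

import Mathlib

/-- For `n ≥ 1` and `k : ZMod n`, the graph `F k` on vertex set `ZMod n`
in which distinct vertices `i` and `j` are adjacent iff `i + j = k`. -/
def F (n : ℕ) (k : ZMod n) : SimpleGraph (ZMod n) where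
  Adj i j := i ≠ j ∧ i + j = k
  symm := ⟨fun i j ⟨h1, h2⟩ => ⟨h1.symm, by rwa [add_comm]⟩⟩
  loopless := ⟨fun i ⟨h, _⟩ => h rfl⟩

/-- A graph has a Hamiltonian path if some walk in it is a Hamiltonian path. -/
def HasHamiltonianPath {V : Type*} [DecidableEq V] (G : SimpleGraph V) : Prop :=
  ∃ (a b : V) (p : G.Walk a b), p.IsHamiltonian

lemma ham_of_seq {V : Type*} [DecidableEq V] [Fintype V] (G : SimpleGraph V)
    (n : ℕ) (hn : 0 < n) (hcard : Fintype.card V = n) (x : ℕ → V)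
    (hadj : ∀ t, t + 1 < n → G.Adj (x t) (x (t + 1)))
    (hinj : ∀ s t, s < n → t < n → x s = x t → s = t) :
    HasHamiltonianPath G := by
  have key : ∀ m, m < n → ∃ p : G.Walk (x 0) (x m),
      p.support = (List.range (m + 1)).map x := by
    intro m
    induction m with
    | zero => exact fun _ => ⟨SimpleGraph.Walk.nil, by simp [List.range_succ]⟩
    | succ m ih =>
      intro hm
      obtain ⟨p, hp⟩ := ih (by omega)
      refine ⟨p.concat (hadj m hm), ?_⟩
      rw [SimpleGraph.Walk.support_concat, hp]
      rw [List.range_succ (n := m + 1), List.map_append]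
      simp
  obtain ⟨p, hp⟩ := key (n - 1) (by omega)
  have hrange : (n - 1 + 1) = n := by omega
  rw [hrange] at hp
  refine ⟨_, _, p, fun v => ?_⟩
  have hnodup : p.support.Nodup := by
    rw [hp]
    exact List.Nodup.map_on
      (fun s hs t ht h => hinj s t (List.mem_range.mp hs) (List.mem_range.mp ht) h)
      List.nodup_range
  have hmem : v ∈ p.support := by
    rw [hp]
    have himg : (Finset.range n).image x = Finset.univ := by
      apply Finset.eq_univ_of_card
      rw [Finset.card_image_of_injOn
        (fun s hs t ht h => hinj s t (Finset.mem_range.mp hs) (Finset.mem_range.mp ht) h),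
        Finset.card_range, hcard]
    have : v ∈ (Finset.range n).image x := by rw [himg]; exact Finset.mem_univ v
    obtain ⟨t, ht, rfl⟩ := Finset.mem_image.mp this
    exact List.mem_map.mpr ⟨t, List.mem_range.mpr (Finset.mem_range.mp ht), rfl⟩
  exact List.count_eq_one_of_mem hnodup hmem

theorem stmt_7 (n : ℕ) (hn : 1 < n) (hodd : Odd n) (k ℓ : ZMod n) :
    HasHamiltonianPath (F n k ⊔ F n ℓ) ↔ IsUnit (k - ℓ) := by
  haveI : NeZero n := ⟨by omega⟩
  constructor
  · rintro ⟨a, b, p, hp⟩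
    by_contra hu
    set d := k - ℓ with hd
    set g := Nat.gcd d.val n with hg
    have hgdvd : g ∣ n := Nat.gcd_dvd_right _ _
    have hg1 : g ≠ 1 := by
      intro h
      apply hu
      have : IsUnit ((d.val : ℕ) : ZMod n) := (ZMod.isUnit_iff_coprime d.val n).mpr h
      rwa [ZMod.natCast_zmod_val] at this
    have hg0 : g ≠ 0 := by
      intro h
      rw [h] at hgdvd
      have := Nat.eq_zero_of_zero_dvd hgdvd
      omega
    have hgodd : Odd g := by
      rcases Nat.even_or_odd g with h | h
      · exfalso
        have h2 : (2 : ℕ) ∣ g := h.two_dvd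
        have : Even n := (even_iff_two_dvd).mpr (h2.trans hgdvd)
        exact (Nat.not_even_iff_odd.mpr hodd) this
      · exact h
    have hg3 : 3 ≤ g := by
      obtain ⟨m, hm⟩ := hgodd
      omega
    haveI : NeZero g := ⟨hg0⟩
    set φ := ZMod.castHom hgdvd (ZMod g) with hφ
    have hφd : φ d = 0 := by
      rw [ZMod.castHom_apply, ← ZMod.natCast_val, ZMod.natCast_eq_zero_iff]
      exact Nat.gcd_dvd_left _ _
    have hφkl : φ k = φ ℓ := by
      have h0 : φ k - φ ℓ = 0 := by rw [← map_sub, ← hd, hφd]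
      linear_combination h0
    have inv : ∀ {u w : ZMod n} (q : (F n k ⊔ F n ℓ).Walk u w), ∀ v, v ∈ q.support →
        φ v = φ u ∨ φ v = φ k - φ u := by
      intro u w q
      induction q with
      | nil => intro v hv; left; simp at hv; rw [hv]
      | @cons u u' w h q ih =>
        intro v hv
        rw [SimpleGraph.Walk.support_cons, List.mem_cons] at hv
        rcases hv with rfl | hv
        · left; rfl
        · have hu' : φ u' = φ k - φ u := by
            change (u ≠ u' ∧ u + u' = k) ∨ (u ≠ u' ∧ u + u' = ℓ) at h
            rcases h with ⟨_, h2⟩ | ⟨_, h2⟩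
            · have h3 := congrArg φ h2; rw [map_add] at h3; linear_combination h3
            · have h3 := congrArg φ h2; rw [map_add, ← hφkl] at h3; linear_combination h3
          rcases ih v hv with h1 | h1
          · right; rw [h1, hu']
          · left; rw [h1, hu']; ring
    have hex : ∃ z : ZMod g, z ≠ φ a ∧ z ≠ φ k - φ a := by
      by_contra hz
      push_neg at hz
      have hsub : (Finset.univ : Finset (ZMod g)) ⊆ {φ a, φ k - φ a} := by
        intro z _
        rcases Classical.em (z = φ a) with h | h
        · simp [h]
        · simp [hz z h]
      have h1 := Finset.card_le_card hsub
      have h2 : ({φ a, φ k - φ a} : Finset (ZMod g)).card ≤ 2 :=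
        (Finset.card_insert_le _ _).trans (by simp)
      rw [Finset.card_univ, ZMod.card] at h1
      omega
    obtain ⟨z, hz1, hz2⟩ := hex
    have hzsurj : φ ((z.val : ℕ) : ZMod n) = z := by
      rw [map_natCast, ZMod.natCast_zmod_val]
    have hmem : ((z.val : ℕ) : ZMod n) ∈ p.support := hp.mem_support _
    rcases inv p _ hmem with h1 | h1 <;> rw [hzsurj] at h1
    · exact hz1 h1
    · exact hz2 h1
  · intro hu
    set d := k - ℓ with hd
    have h2 : IsUnit (2 : ZMod n) := by
      have : IsUnit ((2 : ℕ) : ZMod n) := (ZMod.isUnit_iff_coprime 2 n).mpr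
        (Nat.coprime_two_left.mpr hodd)
      simpa using this
    obtain ⟨u2, hu2⟩ := h2
    set c : ℕ → ℤ := fun t => if Even t then -((t / 2 : ℕ) : ℤ) else ((t / 2 : ℕ) : ℤ) + 1
      with hc
    set x : ℕ → ZMod n := fun t => (u2⁻¹ : (ZMod n)ˣ) * ℓ + ((c t : ℤ) : ZMod n) * d with hx
    have hsum : ∀ t, x t + x (t + 1) = ℓ + ((c t + c (t + 1) : ℤ) : ZMod n) * d := by
      intro t
      have h1 : ((u2⁻¹ : (ZMod n)ˣ) : ZMod n) * ℓ + ((u2⁻¹ : (ZMod n)ˣ) : ZMod n) * ℓ = ℓ := by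
        have h3 : ((2 : ZMod n)) * ((u2⁻¹ : (ZMod n)ˣ) : ZMod n) = 1 := by
          rw [← hu2, ← Units.val_mul, mul_inv_cancel, Units.val_one]
        linear_combination ℓ * h3
      simp only [hx]
      push_cast
      linear_combination h1
    have hcs : ∀ t, Even t → c t + c (t + 1) = 1 := by
      intro t ht
      simp only [hc]
      rw [if_pos ht]
      have h1 : ¬ Even (t + 1) := by simp [Nat.even_add_one, ht]
      rw [if_neg h1]
      have h4 : (t + 1) / 2 = t / 2 := by
        obtain ⟨m, hm⟩ := ht; omega
      rw [h4]; ring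
    have hco : ∀ t, ¬ Even t → c t + c (t + 1) = 0 := by
      intro t ht
      simp only [hc]
      rw [if_neg ht]
      have h1 : Even (t + 1) := Nat.even_add_one.mpr ht
      rw [if_pos h1]
      have hodd' : Odd t := Nat.not_even_iff_odd.mp ht
      obtain ⟨m, hm⟩ := hodd'
      have h4 : (t + 1) / 2 = t / 2 + 1 := by omega
      rw [h4]; push_cast; ring
    have hbound : ∀ r, r < n → -(n : ℤ) < 2 * c r ∧ 2 * c r < n := by
      intro r hr
      simp only [hc]
      rcases Nat.even_or_odd r with h | h
      · rw [if_pos h]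
        obtain ⟨m, hm⟩ := h
        constructor <;> push_cast <;> omega
      · rw [if_neg (Nat.not_even_iff_odd.mpr h)]
        obtain ⟨m, hm⟩ := h
        obtain ⟨m', hm'⟩ := hodd
        constructor <;> push_cast <;> omega
    have hinj : ∀ s t, s < n → t < n → x s = x t → s = t := by
      intro s t hs ht hxe
      simp only [hx, add_right_inj] at hxe
      have hde : ((c s : ℤ) : ZMod n) = ((c t : ℤ) : ZMod n) := hu.mul_right_cancel hxe
      have hdvd : (n : ℤ) ∣ (c t - c s) :=
        ((ZMod.intCast_eq_intCast_iff _ _ _).mp hde).dvd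
      have hbs := hbound s hs
      have hbt := hbound t ht
      have heq : c t - c s = 0 := by
        refine Int.eq_zero_of_abs_lt_dvd hdvd ?_
        rw [abs_lt]
        constructor <;> omega
      have hcc : c s = c t := by omega
      simp only [hc] at hcc
      rcases Nat.even_or_odd s with h | h <;> rcases Nat.even_or_odd t with h' | h'
      · rw [if_pos h, if_pos h'] at hcc
        obtain ⟨m, hm⟩ := h; obtain ⟨m', hm'⟩ := h'
        omega
      · rw [if_pos h, if_neg (Nat.not_even_iff_odd.mpr h')] at hcc
        omega
      · rw [if_neg (Nat.not_even_iff_odd.mpr h), if_pos h'] at hcc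
        omega
      · rw [if_neg (Nat.not_even_iff_odd.mpr h), if_neg (Nat.not_even_iff_odd.mpr h')] at hcc
        obtain ⟨m, hm⟩ := h; obtain ⟨m', hm'⟩ := h'
        omega
    apply ham_of_seq _ n (by omega) (ZMod.card n) x _ hinj
    intro t ht
    have hne : x t ≠ x (t + 1) := fun h => by
      have := hinj t (t + 1) (by omega) ht h
      omega
    rcases Nat.even_or_odd t with h | h
    · left
      refine And.intro hne ?_
      rw [hsum t, hcs t h]
      rw [hd]
      push_cast
      ring
    · right
      refine And.intro hne ?_
      rw [hsum t, hco t (Nat.not_even_iff_odd.mpr h)]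
      push_cast
      ring
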